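/- Let n : ℕ. On ℂⁿ × ℂⁿ define the antisymmetric bilinear form ω((x,y),(x',y')) = ∑_i (x i * y' i − y i * x' i) and the hermitian form h((x,y),(x',y')) = ∑_i conj(x i) * x' i − ∑_i conj(y i) * y' i. For Z ∈ Matrix (Fin n) (Fin n) ℂ let W_Z = {(Z *ᵥ w, w) | w ∈ (Fin n → ℂ)}. Then: (a) ω vanishes identically on W_Z × W_Z if and only if Z is symmetric (Zᵀ = Z); (b) W_Z is ω-isotropic and satisfies h(v,v) < 0 for every nonzero v ∈ W_Z if and only if Zᵀ = Z and 1 − Zᴴ * Z is positive definite. -/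

import Mathlib

open Matrix
open scoped ComplexOrder

/-- Bounded symmetric domain of `Sp(n;ℝ)` inside the `SU(n,n)` domain: the graph `W_Z` is
isotropic for the symplectic form `ω` iff `Z` is symmetric, and is `ω`-isotropic and
`h`-negative definite iff `Zᵀ = Z` and `1 − Zᴴ Z` is positive definite. -/
theorem stmt_7 (n : ℕ)
    (ω h : ((Fin n → ℂ) × (Fin n → ℂ)) → ((Fin n → ℂ) × (Fin n → ℂ)) → ℂ)
    (hω : ∀ v v', ω v v' = ∑ i, (v.1 i * v'.2 i - v.2 i * v'.1 i))
    (hh : ∀ v v', h v v' =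
      (∑ i, starRingEnd ℂ (v.1 i) * v'.1 i) - ∑ i, starRingEnd ℂ (v.2 i) * v'.2 i)
    (Z : Matrix (Fin n) (Fin n) ℂ) :
    ((∀ v ∈ {v : (Fin n → ℂ) × (Fin n → ℂ) | ∃ w, v = (Z *ᵥ w, w)},
        ∀ v' ∈ {v : (Fin n → ℂ) × (Fin n → ℂ) | ∃ w, v = (Z *ᵥ w, w)},
        ω v v' = 0) ↔ Z.transpose = Z) ∧
    (((∀ v ∈ {v : (Fin n → ℂ) × (Fin n → ℂ) | ∃ w, v = (Z *ᵥ w, w)},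
        ∀ v' ∈ {v : (Fin n → ℂ) × (Fin n → ℂ) | ∃ w, v = (Z *ᵥ w, w)},
        ω v v' = 0) ∧
      (∀ v ∈ {v : (Fin n → ℂ) × (Fin n → ℂ) | ∃ w, v = (Z *ᵥ w, w)},
        v ≠ 0 → h v v < 0)) ↔
      (Z.transpose = Z ∧ (1 - Z.conjTranspose * Z).PosDef)) := by
  -- evaluation of ω on the graph
  have omega_eval : ∀ w w' : Fin n → ℂ,
      ω (Z *ᵥ w, w) (Z *ᵥ w', w') = w ⬝ᵥ ((Zᵀ - Z) *ᵥ w') := by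
    intro w w'
    rw [hω]
    have h1 : w ⬝ᵥ (Zᵀ *ᵥ w') = (Z *ᵥ w) ⬝ᵥ w' := by
      rw [dotProduct_mulVec, vecMul_transpose]
    simp only [Matrix.sub_mulVec, dotProduct_sub, h1]
    simp [dotProduct, Finset.sum_sub_distrib]
  -- evaluation of h on the diagonal of the graph
  have h_eval : ∀ w : Fin n → ℂ,
      h (Z *ᵥ w, w) (Z *ᵥ w, w) = -(star w ⬝ᵥ ((1 - Zᴴ * Z) *ᵥ w)) := by
    intro w
    rw [hh]
    have h1 : star w ⬝ᵥ ((Zᴴ * Z) *ᵥ w) = star (Z *ᵥ w) ⬝ᵥ (Z *ᵥ w) := by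
      rw [← mulVec_mulVec, dotProduct_mulVec, ← star_mulVec]
    simp only [Matrix.sub_mulVec, Matrix.one_mulVec, dotProduct_sub, h1, neg_sub]
    simp only [dotProduct, Pi.star_apply, starRingEnd_apply]
  -- part (a)
  have ha : (∀ v ∈ {v : (Fin n → ℂ) × (Fin n → ℂ) | ∃ w, v = (Z *ᵥ w, w)},
        ∀ v' ∈ {v : (Fin n → ℂ) × (Fin n → ℂ) | ∃ w, v = (Z *ᵥ w, w)},
        ω v v' = 0) ↔ Zᵀ = Z := by
    constructor
    · intro H
      ext i j
      have := H (Z *ᵥ Pi.single i 1, Pi.single i 1) ⟨Pi.single i 1, rfl⟩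
        (Z *ᵥ Pi.single j 1, Pi.single j 1) ⟨Pi.single j 1, rfl⟩
      rw [omega_eval] at this
      have h2 : (Pi.single i 1 : Fin n → ℂ) ⬝ᵥ ((Zᵀ - Z) *ᵥ Pi.single j 1)
          = (Zᵀ - Z) i j := by
        simp [single_dotProduct, mulVec_single]
      rw [h2] at this
      have := sub_eq_zero.mp (by simpa [Matrix.sub_apply] using this)
      simpa [Matrix.transpose_apply] using this
    · rintro hZ v ⟨w, rfl⟩ v' ⟨w', rfl⟩
      rw [omega_eval, hZ]
      simp
  refine ⟨ha, ?_⟩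
  rw [ha]
  -- part (b): it remains to deal with the h-negativity part
  constructor
  · rintro ⟨hsym, hneg⟩
    refine ⟨hsym, posDef_iff_dotProduct_mulVec.mpr ⟨?_, ?_⟩⟩
    · -- Hermitian
      simp [Matrix.IsHermitian, conjTranspose_sub, conjTranspose_mul]
    · intro x hx
      have hvne : ((Z *ᵥ x, x) : (Fin n → ℂ) × (Fin n → ℂ)) ≠ 0 := by
        intro hc
        exact hx (congrArg Prod.snd hc)
      have := hneg (Z *ᵥ x, x) ⟨x, rfl⟩ hvne
      rw [h_eval] at this
      exact pos_of_neg_neg this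
  · rintro ⟨hsym, hpd⟩
    refine ⟨hsym, ?_⟩
    rintro v ⟨w, rfl⟩ hv
    have hw : w ≠ 0 := by
      intro hc
      apply hv
      subst hc
      simp [Prod.ext_iff]
    rw [h_eval]
    simpa using neg_neg_of_pos (hpd.dotProduct_mulVec_pos hw)
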